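/- Let Γ be the group dual to B₄ acting on the 4-ary tree over {a,b,c,d}, and let t ∈ {a,b,c,d}. For any v ∈ Γ and any word h, v|_{tt} acts on words the same way as v, i.e., v|_{g·tt}(h) = v|_g(h) for all words g with v(g·tt) = v(g)·t't' for some letter t'. Consequently, if v fixes all vertices of the subtree T̂_n (words of length ≤ n without double letters) then v fixes all vertices of level n of the full tree: Stab_Γ(n) = Stab_Γ(T̂_n). -/

import Mathlib

/-- The action of a state of a Mealy automaton on finite words. -/
def mealy {Q X : Type*} (tr : Q → X → Q) (o : Q → X → X) : Q → List X → List X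
  | _, [] => []
  | q, x :: w => o q x :: mealy tr o (tr q x) w

theorem mealy_bij {Q X : Type*} (tr : Q → X → Q) (o : Q → X → X)
    (h : ∀ q, Function.Bijective (o q)) (q : Q) : Function.Bijective (mealy tr o q) := by
  classical
  have L : ∀ (w : List X) (q : Q),
      mealy (fun q x => tr q (Function.surjInv (h q).surjective x))
        (fun q x => Function.surjInv (h q).surjective x) q (mealy tr o q w) = w := by
    intro w
    induction w with
    | nil => intro q; rfl
    | cons x w ih =>
      intro q
      have hx : Function.surjInv (h q).surjective (o q x) = x :=
        Function.leftInverse_surjInv (h q) x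
      simp [mealy, hx, ih]
  have R : ∀ (w : List X) (q : Q),
      mealy tr o q
        (mealy (fun q x => tr q (Function.surjInv (h q).surjective x))
          (fun q x => Function.surjInv (h q).surjective x) q w) = w := by
    intro w
    induction w with
    | nil => intro q; rfl
    | cons x w ih =>
      intro q
      have hx : o q (Function.surjInv (h q).surjective x) = x :=
        Function.rightInverse_surjInv (h q).surjective x
      simp [mealy, hx, ih]
  exact ⟨Function.LeftInverse.injective (fun w => L w q),
    Function.RightInverse.surjective (fun w => R w q)⟩

/-- Transition function of the Bellaterra automaton B4 (states a,b,c,d = 0,1,2,3). -/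
def tr4 : Fin 4 → Bool → Fin 4 := fun q x => if x then ![1, 2, 3, 0] q else ![2, 1, 3, 0] q

/-- Output function of B4: a,b act trivially, c,d flip. -/
def out4 : Fin 4 → Bool → Bool := fun q => if q.val ≤ 1 then id else Bool.not

def act (q : Fin 4) : List Bool → List Bool := mealy tr4 out4 q

noncomputable def actE (q : Fin 4) : Equiv.Perm (List Bool) :=
  Equiv.ofBijective _ (mealy_bij tr4 out4 (by decide) q)

/-- The states of the dual automaton of B4. -/
def dAct (x : Bool) : List (Fin 4) → List (Fin 4) :=
  mealy (fun x q => out4 q x) (fun x q => tr4 q x) x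

noncomputable def dActE (x : Bool) : Equiv.Perm (List (Fin 4)) :=
  Equiv.ofBijective _ (mealy_bij (fun x q => out4 q x) (fun x q => tr4 q x) (by decide) x)


/-- The group Γ generated by the dual automaton of B4. -/
noncomputable def Gamma : Subgroup (Equiv.Perm (List (Fin 4))) :=
  Subgroup.closure {dActE false, dActE true}

section Aux

lemma mealy_length {Q X : Type*} (tr : Q → X → Q) (o : Q → X → X) :
    ∀ (w : List X) (q : Q), (mealy tr o q w).length = w.length := by
  intro w
  induction w with
  | nil => intro q; rfl
  | cons x w ih => intro q; simp [mealy, ih]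

lemma mealy_append {Q X : Type*} (tr : Q → X → Q) (o : Q → X → X) :
    ∀ (g h : List X) (q : Q),
      mealy tr o q (g ++ h) = mealy tr o q g ++ mealy tr o (g.foldl tr q) h := by
  intro g
  induction g with
  | nil => intro h q; rfl
  | cons x g ih => intro h q; simp [mealy, ih]

/-- The key invariant satisfied by all elements of Γ. -/
def Good (v : Equiv.Perm (List (Fin 4))) : Prop :=
  (∀ w, (v w).length = w.length) ∧
  (∀ g h : List (Fin 4), (v (g ++ h)).take g.length = v g) ∧
  (∀ (g h : List (Fin 4)) (t : Fin 4), ∃ t',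
    v (g ++ [t, t] ++ h) = v g ++ [t', t'] ++ (v (g ++ h)).drop g.length)

lemma good_one : Good 1 := by
  refine ⟨fun w => rfl, fun g h => by simp, fun g h t => ⟨t, by simp⟩⟩

lemma good_gen (x : Bool) : Good (dActE x) := by
  have hc : ∀ w, dActE x w = dAct x w := fun w => rfl
  have hfact1 : ∀ (t : Fin 4) (y : Bool), tr4 t (out4 t y) = tr4 t y := by decide
  have hfact2 : ∀ (t : Fin 4) (y : Bool), out4 t (out4 t y) = y := by decide
  refine ⟨fun w => mealy_length _ _ w x, ?_, ?_⟩
  · intro g h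
    rw [hc, hc, dAct, mealy_append]
    have hl : (mealy (fun x q => out4 q x) (fun x q => tr4 q x) x g).length = g.length :=
      mealy_length _ _ g x
    rw [← hl, List.take_left]
  · intro g h t
    set tr' : Bool → Fin 4 → Bool := fun x q => out4 q x with htr
    set o' : Bool → Fin 4 → Fin 4 := fun x q => tr4 q x with ho
    set y := g.foldl tr' x with hy
    refine ⟨tr4 t y, ?_⟩
    simp only [hc, dAct]
    rw [List.append_assoc g, mealy_append tr' o' g ([t, t] ++ h), mealy_append tr' o' g h]
    have h1 : mealy tr' o' y ([t, t] ++ h)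
        = [tr4 t y, tr4 t y] ++ mealy tr' o' y h := by
      show o' y t :: mealy tr' o' (tr' y t) ([t] ++ h) = _
      show o' y t :: (o' (tr' y t) t :: mealy tr' o' (tr' (tr' y t) t) h) = _
      simp only [htr, ho, hfact1 t y, hfact2 t y]
      rfl
    have h2 : (mealy tr' o' x g ++ mealy tr' o' y h).drop g.length
        = mealy tr' o' y h := by
      have hl : (mealy tr' o' x g).length = g.length := mealy_length _ _ g x
      rw [← hl, List.drop_left]
    rw [← hy, h1, h2]
    simp [List.append_assoc]
    rfl

theorem Equiv.Perm.apply_inv_self {α : Type*} (f : Equiv.Perm α) (x : α) : f (f⁻¹ x) = x :=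
  Equiv.apply_symm_apply f x

theorem Equiv.Perm.inv_apply_self {α : Type*} (f : Equiv.Perm α) (x : α) : f⁻¹ (f x) = x :=
  Equiv.symm_apply_apply f x

lemma good_mul {v u : Equiv.Perm (List (Fin 4))} (hv : Good v) (hu : Good u) :
    Good (v * u) := by
  obtain ⟨hvl, hvp, hvd⟩ := hv
  obtain ⟨hul, hup, hud⟩ := hu
  have hsplit : ∀ g h : List (Fin 4), u (g ++ h) = u g ++ (u (g ++ h)).drop g.length := by
    intro g h
    conv_lhs => rw [← List.take_append_drop g.length (u (g ++ h))]
    rw [hup]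
  refine ⟨fun w => by simp [hvl, hul], ?_, ?_⟩
  · intro g h
    have hl : (u g).length = g.length := hul g
    simp only [Equiv.Perm.mul_apply]
    rw [hsplit g h, ← hl, hvp]
  · intro g h t
    obtain ⟨s, hs⟩ := hud g h t
    obtain ⟨s', hs'⟩ := hvd (u g) ((u (g ++ h)).drop g.length) s
    refine ⟨s', ?_⟩
    have hl : (u g).length = g.length := hul g
    simp only [Equiv.Perm.mul_apply]
    rw [hs, hs', ← hsplit g h, hl]

lemma good_inv {v : Equiv.Perm (List (Fin 4))} (hv : Good v) : Good v⁻¹ := by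
  classical
  obtain ⟨hvl, hvp, hvd⟩ := hv
  have hlen : ∀ w : List (Fin 4), (v⁻¹ w).length = w.length := by
    intro w
    conv_rhs => rw [← Equiv.Perm.apply_inv_self v w]
    exact (hvl _).symm
  have hpre : ∀ g h : List (Fin 4), (v⁻¹ (g ++ h)).take g.length = v⁻¹ g := by
    intro g h
    set w := v⁻¹ (g ++ h) with hw
    set g₀ := w.take g.length with hg0
    set h₀ := w.drop g.length with hh0
    have hsplit : g₀ ++ h₀ = w := List.take_append_drop _ _
    have hwlen : w.length = g.length + h.length := by
      rw [hw, hlen]; simp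
    have hg0len : g₀.length = g.length := by
      rw [hg0, List.length_take, hwlen]; omega
    have hvw : v (g₀ ++ h₀) = g ++ h := by rw [hsplit, hw, Equiv.Perm.apply_inv_self]
    have hvg0 : v g₀ = g := by
      have := hvp g₀ h₀
      rw [hvw, hg0len] at this
      rw [← this, List.take_left]
    rw [← hvg0, Equiv.Perm.inv_apply_self]
  refine ⟨hlen, hpre, ?_⟩
  intro g h t
  set w := v⁻¹ (g ++ h) with hw
  set g₀ := w.take g.length with hg0
  set h₀ := w.drop g.length with hh0
  have hsplit : g₀ ++ h₀ = w := List.take_append_drop _ _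
  have hwlen : w.length = g.length + h.length := by rw [hw, hlen]; simp
  have hg0len : g₀.length = g.length := by rw [hg0, List.length_take, hwlen]; omega
  have hvw : v (g₀ ++ h₀) = g ++ h := by rw [hsplit, hw, Equiv.Perm.apply_inv_self]
  have hvg0 : v g₀ = g := by
    have := hvp g₀ h₀
    rw [hvw, hg0len] at this
    rw [← this, List.take_left]
  -- the letter map s ↦ F s is injective, hence surjective
  set F : Fin 4 → Fin 4 := fun s => (hvd g₀ h₀ s).choose with hF
  have hFspec : ∀ s, v (g₀ ++ [s, s] ++ h₀) = v g₀ ++ [F s, F s] ++ (v (g₀ ++ h₀)).drop g₀.length :=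
    fun s => (hvd g₀ h₀ s).choose_spec
  have hFinj : Function.Injective F := by
    intro s₁ s₂ hss
    have h1 := hFspec s₁
    have h2 := hFspec s₂
    rw [hss, ← h2] at h1
    have := v.injective h1
    have := List.append_cancel_left (List.append_cancel_right this)
    simpa using this
  obtain ⟨s, hst⟩ := Finite.surjective_of_injective hFinj t
  refine ⟨s, ?_⟩
  have key : v (g₀ ++ [s, s] ++ h₀) = g ++ [t, t] ++ h := by
    rw [hFspec s, hst, hvg0, hvw, hg0len]
    simp
  have : v⁻¹ (g ++ [t, t] ++ h) = g₀ ++ [s, s] ++ h₀ := by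
    rw [← key, Equiv.Perm.inv_apply_self]
  have hg0' : g₀ = v⁻¹ g := by rw [← hvg0, Equiv.Perm.inv_apply_self]
  rw [this, hg0']

lemma good_gamma : ∀ v ∈ Gamma, Good v := by
  intro v hv
  refine Subgroup.closure_induction ?_ good_one ?_ ?_ hv
  · intro x hx
    rcases hx with h | h <;> subst h
    · exact good_gen false
    · exact good_gen true
  · exact fun x y _ _ hx hy => good_mul hx hy
  · exact fun x _ hx => good_inv hx

lemma exists_double {α : Type*} :
    ∀ (w : List α), ¬ w.Chain' (· ≠ ·) → ∃ (g : List α) (t : α) (h : List α),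
      w = g ++ [t, t] ++ h := by
  intro w
  induction w with
  | nil => intro h; exact absurd List.isChain_nil h
  | cons a w ih =>
    intro hnot
    match w, ih with
    | [], _ => exact absurd (List.isChain_singleton a) hnot
    | b :: w, ih =>
      rw [List.Chain', List.isChain_cons_cons] at hnot
      push_neg at hnot
      by_cases hab : a = b
      · subst hab
        exact ⟨[], a, w, rfl⟩
      · obtain ⟨g, t, h, hgth⟩ := ih (hnot (Ne.intro hab))
        exact ⟨a :: g, t, h, by rw [hgth]; rfl⟩

end Aux

/-- for any v ∈ Γ, the section of v at a double letter tt acts as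
v itself: v|_{g·tt}(h) = v|_g(h); consequently an element of Γ fixes all
vertices of the subtree T̂_n (words of length ≤ n without double letters) if
and only if it fixes all vertices of level n of the full tree,
i.e. Stab_Γ(n) = Stab_Γ(T̂_n). -/
theorem section_at_double_letters_and_stabilizers :
    (∀ v ∈ Gamma, ∀ (g h : List (Fin 4)) (t : Fin 4),
        (v (g ++ [t, t] ++ h)).drop (g.length + 2) = (v (g ++ h)).drop g.length) ∧
    (∀ v ∈ Gamma, ∀ n : ℕ,
        (∀ w : List (Fin 4), w.length ≤ n → w.Chain' (· ≠ ·) → v w = w) ↔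
        (∀ w : List (Fin 4), w.length = n → v w = w)) := by
  constructor
  · intro v hv g h t
    obtain ⟨hvl, hvp, hvd⟩ := good_gamma v hv
    obtain ⟨t', ht'⟩ := hvd g h t
    rw [ht']
    have hl : g.length + 2 = (v g ++ [t', t']).length := by simp [hvl g]
    rw [hl, List.drop_left]
  · intro v hv n
    obtain ⟨hvl, hvp, hvd⟩ := good_gamma v hv
    constructor
    · intro hfix
      have main : ∀ m, ∀ w : List (Fin 4), w.length = m → m ≤ n → v w = w := by
        intro m
        induction m using Nat.strong_induction_on with
        | _ m ih =>
          intro w hwm hmn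
          by_cases hch : w.Chain' (· ≠ ·)
          · exact hfix w (hwm ▸ hmn) hch
          · obtain ⟨g, t, h, hw⟩ := exists_double w hch
            subst hw
            have hlen : g.length + 2 + h.length = m := by simp at hwm; omega
            have hgh : v (g ++ h) = g ++ h :=
              ih (g.length + h.length) (by omega) _ (by simp) (by omega)
            have hg : v g = g := ih g.length (by omega) g rfl (by omega)
            have hgt : v (g ++ [t]) = g ++ [t] :=
              ih (g.length + 1) (by omega) _ (by simp) (by omega)
            obtain ⟨t', ht'⟩ := hvd g h t
            have hdrop : (v (g ++ h)).drop g.length = h := by rw [hgh, List.drop_left]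
            have hpref := hvp (g ++ [t]) ([t] ++ h)
            have harr : (g ++ [t]) ++ ([t] ++ h) = g ++ [t, t] ++ h := by simp
            rw [harr, hgt, ht'] at hpref
            have e : v g ++ [t', t'] ++ (v (g ++ h)).drop g.length
                = (g ++ [t']) ++ ([t'] ++ h) := by rw [hg, hdrop]; simp
            rw [e, List.take_left' (by simp)] at hpref
            have htt : t' = t := by
              have := List.append_cancel_left hpref
              simpa using this
            rw [ht', hg, hdrop, htt]
      intro w hw
      exact main n w hw le_rfl
    · intro hfix w hle _
      have hpad := hfix (w ++ List.replicate (n - w.length) 0) (by simp; omega)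
      have hq := hvp w (List.replicate (n - w.length) 0)
      rw [hpad, List.take_left] at hq
      exact hq.symm
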